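/- (Fluid queue-length formula.) Let ϑ ∈ I, let ζ be the unique fluid model solution with initial measure ϑ, let w be the unique workload fluid model solution with w(0) = w_ϑ, and define τ(t) = inf{s ∈ [0,t] : w(s) + s ≥ t}. Then for each 1 ≤ k ≤ K: if 0 ≤ t < w(0), then ζ_k(t)([0,∞)²) = ϑ_k([t,∞)×[t,∞)) + λ_k ∫_0^t G_k(a) da; and if t ≥ w(0), then ζ_k(t)([0,∞)²) = λ_k ∫_0^{w(τ(t))} G_k(a) da. -/

import Mathlib

open MeasureTheory Set Filter Topology
open scoped ENNReal

noncomputable section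

namespace OverloadedFIFO

/-- The complement `G(x) = Γ((x, ∞))` of the cumulative distribution function of `Γ`. -/
def Gk (Γ : MeasureTheory.Measure ℝ) (x : ℝ) : ℝ := (Γ (Set.Ioi x)).toReal

/-- Model data: `K` job classes with arrival rates `lam`, service rates `mu`, and
deadline (patience) distributions `Γ`, in the overloaded regime `ρ > 1`.  Each `Γ k` is a
Borel probability measure on `[0,∞)` (no mass on negatives), with continuous c.d.f.
(no atoms, in particular `Γ k {0} = 0`) and finite mean. -/
structure Data (K : ℕ) where
  lam : Fin K → ℝ
  mu : Fin K → ℝ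
  Γ : Fin K → MeasureTheory.Measure ℝ
  lam_pos : ∀ k, 0 < lam k
  mu_pos : ∀ k, 0 < mu k
  Γ_prob : ∀ k, MeasureTheory.IsProbabilityMeasure (Γ k)
  Γ_null_neg : ∀ k, Γ k (Set.Iio 0) = 0
  Γ_noAtom : ∀ k, ∀ x : ℝ, Γ k {x} = 0
  Γ_finite_mean : ∀ k, MeasureTheory.Integrable id (Γ k)
  rho_gt_one : 1 < ∑ k, lam k / mu k

instance {K : ℕ} (D : Data K) (k : Fin K) : IsProbabilityMeasure (D.Γ k) := D.Γ_prob k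

/-- `ρ_k = λ_k / μ_k`. -/
def Data.rho {K : ℕ} (D : Data K) (k : Fin K) : ℝ := D.lam k / D.mu k

/-- `ρ = Σ_k ρ_k`. -/
def Data.rhoTot {K : ℕ} (D : Data K) : ℝ := ∑ k, D.rho k

/-- A workload fluid model solution: a nonnegative function `w` on `[0,∞)` satisfying
`w(t) = w(0) + Σ_k ρ_k ∫_0^t G_k(w(s)) ds − t` for all `t ≥ 0`. -/
def IsWorkloadSol {K : ℕ} (D : Data K) (w : ℝ → ℝ) : Prop :=
  (∀ t : ℝ, 0 ≤ t → 0 ≤ w t) ∧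
  (∀ k : Fin K, ∀ t : ℝ, 0 ≤ t →
    IntervalIntegrable (fun s => Gk (D.Γ k) (w s)) volume 0 t) ∧
  (∀ t : ℝ, 0 ≤ t →
    w t = w 0 + (∑ k, D.rho k * ∫ s in (0:ℝ)..t, Gk (D.Γ k) (w s)) - t)

/-- `w_l = sup {u ≥ 0 : Σ_k ρ_k G_k(u) > 1}`. -/
def wl {K : ℕ} (D : Data K) : ℝ :=
  sSup {u : ℝ | 0 ≤ u ∧ 1 < ∑ k, D.rho k * Gk (D.Γ k) u}

/-- `w_u = sup {u ≥ 0 : Σ_k ρ_k G_k(u) ≥ 1}`. -/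
def wu {K : ℕ} (D : Data K) : ℝ :=
  sSup {u : ℝ | 0 ≤ u ∧ 1 ≤ ∑ k, D.rho k * Gk (D.Γ k) u}

/-- `d_max = max_k sup {x ≥ 0 : G_k(x) > 0} ∈ (0,∞]`, as an extended nonnegative real. -/
def dmax {K : ℕ} (D : Data K) : ℝ≥0∞ :=
  ⨆ k, sSup (ENNReal.ofReal '' {x : ℝ | 0 ≤ x ∧ 0 < Gk (D.Γ k) x})

/-- `τ(t) = inf {s ∈ [0,t] : w(s) + s ≥ t}`. -/
def tauF (w : ℝ → ℝ) (t : ℝ) : ℝ := sInf {s : ℝ | 0 ≤ s ∧ s ≤ t ∧ t ≤ w s + s}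

/-- The nonnegative quadrant `[0,∞)²`. -/
def Q : Set (ℝ × ℝ) := {p | 0 ≤ p.1 ∧ 0 ≤ p.2}

/-- The shift `B_x = {y ∈ [0,∞)² : y − x ∈ B}` of a set `B ⊆ [0,∞)²`. -/
def shift (B : Set (ℝ × ℝ)) (x : ℝ × ℝ) : Set (ℝ × ℝ) :=
  {y | y ∈ Q ∧ (y.1 - x.1, y.2 - x.2) ∈ B}

/-- Diagonal shift `B_t = B_{(t,t)}`. -/
def shiftd (B : Set (ℝ × ℝ)) (t : ℝ) : Set (ℝ × ℝ) := shift B (t, t)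

/-- The set `C = ([0,∞)×{0}) ∪ ({0}×[0,∞))`. -/
def Cset : Set (ℝ × ℝ) := {p | (0 ≤ p.1 ∧ p.2 = 0) ∨ (p.1 = 0 ∧ 0 ≤ p.2)}

/-- The `κ`-enlargement `B^κ = {x ∈ [0,∞)² : inf_{y ∈ B} ‖x−y‖ < κ}` (Euclidean norm). -/
def enlarge (B : Set (ℝ × ℝ)) (κ : ℝ) : Set (ℝ × ℝ) :=
  {x | x ∈ Q ∧ ∃ y ∈ B, Real.sqrt ((x.1 - y.1) ^ 2 + (x.2 - y.2) ^ 2) < κ}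

/-- `w_ϑ = sup {x ≥ 0 : ϑ_+([x,∞)×[0,∞)) > 0}` for a `K`-tuple `ϑ` of measures on `[0,∞)²`. -/
def wMeas {K : ℕ} (ϑ : Fin K → MeasureTheory.Measure (ℝ × ℝ)) : ℝ :=
  sSup {x : ℝ | 0 ≤ x ∧ 0 < ∑ k, ϑ k (Set.Ici x ×ˢ Set.Ici (0:ℝ))}

/-- Membership in the set `I` of admissible initial measures: each `ϑ k` is a finite Borel
measure on `[0,∞)²`; (I.1) the superposition charges no corner set `C_x`, `x ∈ [0,∞)²`;
(I.2) `w_ϑ < ∞`; (I.3) `max_k G_k(w_ϑ − ε) > 0` for every `ε > 0`. -/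
def MemI {K : ℕ} (D : Data K) (ϑ : Fin K → MeasureTheory.Measure (ℝ × ℝ)) : Prop :=
  (∀ k, IsFiniteMeasure (ϑ k)) ∧
  (∀ k, ϑ k Qᶜ = 0) ∧
  (∀ x ∈ Q, (∑ k, ϑ k (shift Cset x)) = 0) ∧
  BddAbove {x : ℝ | 0 ≤ x ∧ 0 < ∑ k, ϑ k (Set.Ici x ×ˢ Set.Ici (0:ℝ))} ∧
  (∀ ε : ℝ, 0 < ε → ∃ k, 0 < Gk (D.Γ k) (wMeas ϑ - ε))

/-- `δ⁺_w`: the Dirac measure at `w` if `w > 0`, and the zero measure otherwise. -/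
def deltaPlus (w : ℝ) : MeasureTheory.Measure ℝ :=
  if 0 < w then MeasureTheory.Measure.dirac w else 0

instance (w : ℝ) : SFinite (deltaPlus w) := by
  unfold deltaPlus; split_ifs <;> infer_instance

/-- `(δ⁺_w × Γ)(B)`, as a real number. -/
def kern (Γ : MeasureTheory.Measure ℝ) (w : ℝ) (B : Set (ℝ × ℝ)) : ℝ :=
  (((deltaPlus w).prod Γ) B).toReal

/-- A (measure-valued) fluid model solution with initial measure `ϑ`: a family
`ζ(t) = (ζ_1(t),…,ζ_K(t))` of finite Borel measures on `[0,∞)²` with `ζ(0) = ϑ` satisfying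
`ζ_k(t)(B) = ϑ_k(B_t) + λ_k ∫_0^t (δ⁺_{w(s)} × Γ_k)(B_{t−s}) ds` for every Borel
`B ⊆ [0,∞)²` and `t ≥ 0`, where `w` is the (unique) workload fluid model solution with
`w(0) = w_ϑ`. -/
def IsFluidSol {K : ℕ} (D : Data K) (ϑ : Fin K → MeasureTheory.Measure (ℝ × ℝ))
    (ζ : ℝ → Fin K → MeasureTheory.Measure (ℝ × ℝ)) : Prop :=
  ∃ w : ℝ → ℝ, IsWorkloadSol D w ∧ w 0 = wMeas ϑ ∧
    (∀ t : ℝ, 0 ≤ t → ∀ k, IsFiniteMeasure (ζ t k) ∧ ζ t k Qᶜ = 0) ∧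
    (∀ k, ζ 0 k = ϑ k) ∧
    (∀ k, ∀ B : Set (ℝ × ℝ), B ⊆ Q → MeasurableSet B → ∀ t : ℝ, 0 ≤ t →
      IntervalIntegrable (fun s => kern (D.Γ k) (w s) (shiftd B (t - s))) volume 0 t ∧
      ζ t k B = ϑ k (shiftd B t) +
        ENNReal.ofReal (D.lam k * ∫ s in (0:ℝ)..t, kern (D.Γ k) (w s) (shiftd B (t - s))))

/-- The candidate invariant state `θ^w`:
`θ^w_k(B) = λ_k ∫_0^w Γ_k({p ≥ u : (w−u, p−u) ∈ B}) du`. -/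
def thetaW {K : ℕ} (D : Data K) (w : ℝ) (k : Fin K) : MeasureTheory.Measure (ℝ × ℝ) :=
  ENNReal.ofReal (D.lam k) •
    MeasureTheory.Measure.map (fun up : ℝ × ℝ => (w - up.1, up.2 - up.1))
      ((((MeasureTheory.volume.restrict (Set.Ioo (0:ℝ) w))).prod (D.Γ k)).restrict
        {up : ℝ × ℝ | up.1 ≤ up.2})

/-! ### Auxiliary lemmas -/

lemma Gk_nonneg (Γ : Measure ℝ) (x : ℝ) : 0 ≤ Gk Γ x := ENNReal.toReal_nonneg

lemma Gk_le_one (Γ : Measure ℝ) [IsProbabilityMeasure Γ] (x : ℝ) : Gk Γ x ≤ 1 := by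
  have h : Γ (Set.Ioi x) ≤ 1 := prob_le_one
  have := ENNReal.toReal_mono (by simp) h
  simpa [Gk] using this

lemma Gk_antitone (Γ : Measure ℝ) [IsFiniteMeasure Γ] : Antitone (Gk Γ) := fun _ _ hab =>
  ENNReal.toReal_mono (measure_ne_top _ _) (measure_mono (Set.Ioi_subset_Ioi hab))

variable {K : ℕ}

lemma rho_nonneg (D : Data K) (k : Fin K) : 0 ≤ D.rho k :=
  le_of_lt (div_pos (D.lam_pos k) (D.mu_pos k))

lemma workload_sub (D : Data K) {w : ℝ → ℝ} (hw : IsWorkloadSol D w)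
    {a b : ℝ} (ha : 0 ≤ a) (hb : 0 ≤ b) :
    (w b + b) - (w a + a) = ∑ k, D.rho k * ∫ s in a..b, Gk (D.Γ k) (w s) := by
  have hsum : ∑ k, D.rho k * ∫ s in a..b, Gk (D.Γ k) (w s)
      = (∑ k, D.rho k * ∫ s in (0:ℝ)..b, Gk (D.Γ k) (w s))
        - ∑ k, D.rho k * ∫ s in (0:ℝ)..a, Gk (D.Γ k) (w s) := by
    rw [← Finset.sum_sub_distrib]
    refine Finset.sum_congr rfl fun k _ => ?_
    rw [← mul_sub, intervalIntegral.integral_interval_sub_left (hw.2.1 k b hb) (hw.2.1 k a ha)]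
  linarith [hw.2.2 a ha, hw.2.2 b hb, hsum]

lemma workload_mono (D : Data K) {w : ℝ → ℝ} (hw : IsWorkloadSol D w)
    {a b : ℝ} (ha : 0 ≤ a) (hab : a ≤ b) : w a + a ≤ w b + b := by
  have hb : 0 ≤ b := ha.trans hab
  have hs := workload_sub D hw ha hb
  have hnn : 0 ≤ ∑ k, D.rho k * ∫ s in a..b, Gk (D.Γ k) (w s) :=
    Finset.sum_nonneg fun k _ => mul_nonneg (rho_nonneg D k)
      (intervalIntegral.integral_nonneg hab fun u _ => Gk_nonneg _ _)
  linarith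

lemma rhoTot_nonneg (D : Data K) : 0 ≤ D.rhoTot :=
  Finset.sum_nonneg fun k _ => rho_nonneg D k

lemma workload_cont (D : Data K) {w : ℝ → ℝ} (hw : IsWorkloadSol D w) :
    ContinuousOn (fun s => w s + s) (Set.Ici (0:ℝ)) := by
  have L : LipschitzOnWith (Real.toNNReal D.rhoTot) (fun s => w s + s) (Set.Ici (0:ℝ)) := by
    apply LipschitzOnWith.of_dist_le_mul
    intro x hx y hy
    rw [Real.dist_eq, Real.dist_eq]
    have h1 := workload_sub D hw (Set.mem_Ici.mp hy) (Set.mem_Ici.mp hx)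
    have h2 : ∀ k : Fin K, |D.rho k * ∫ s in y..x, Gk (D.Γ k) (w s)| ≤ D.rho k * |x - y| := by
      intro k
      rw [abs_mul, abs_of_nonneg (rho_nonneg D k)]
      refine mul_le_mul_of_nonneg_left ?_ (rho_nonneg D k)
      have := intervalIntegral.norm_integral_le_of_norm_le_const
        (C := 1) (f := fun s => Gk (D.Γ k) (w s)) (a := y) (b := x) ?_
      · simpa using this
      · intro s _
        rw [Real.norm_eq_abs, abs_of_nonneg (Gk_nonneg _ _)]
        exact Gk_le_one _ _
    calc |(w x + x) - (w y + y)| = |∑ k, D.rho k * ∫ s in y..x, Gk (D.Γ k) (w s)| := by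
          rw [h1]
      _ ≤ ∑ k, |D.rho k * ∫ s in y..x, Gk (D.Γ k) (w s)| := Finset.abs_sum_le_sum_abs _ _
      _ ≤ ∑ k, D.rho k * |x - y| := Finset.sum_le_sum fun k _ => h2 k
      _ = D.rhoTot * |x - y| := by rw [Data.rhoTot, Finset.sum_mul]
      _ = (Real.toNNReal D.rhoTot : ℝ) * |x - y| := by
          rw [Real.coe_toNNReal _ (rhoTot_nonneg D)]
  exact L.continuousOn

lemma workload_le (D : Data K) {w1 w2 : ℝ → ℝ} (h1 : IsWorkloadSol D w1)
    (h2 : IsWorkloadSol D w2) (h0 : w1 0 = w2 0) {t : ℝ} (ht : 0 ≤ t) : w1 t ≤ w2 t := by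
  by_contra hc
  push_neg at hc
  have hfc : ContinuousOn (fun s => w1 s - w2 s) (Set.Icc 0 t) := by
    have := ((workload_cont D h1).sub (workload_cont D h2)).mono
      (Set.Icc_subset_Ici_self : Set.Icc (0:ℝ) t ⊆ Set.Ici 0)
    have heq : (fun s => (w1 s + s) - (w2 s + s)) = fun s => w1 s - w2 s := by
      funext s; ring
    rw [← heq]; exact this
  set S := {s : ℝ | s ∈ Set.Icc 0 t ∧ w1 s - w2 s ≤ 0} with hSdef
  have hS0 : (0:ℝ) ∈ S := ⟨⟨le_rfl, ht⟩, by simp [h0]⟩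
  have hSbdd : BddAbove S := ⟨t, fun s hs => hs.1.2⟩
  have hSclosed : IsClosed S := by
    have : S = Set.Icc 0 t ∩ (fun s => w1 s - w2 s) ⁻¹' Set.Iic 0 := rfl
    rw [this]
    exact hfc.preimage_isClosed_of_isClosed isClosed_Icc isClosed_Iic
  set a := sSup S with ha
  have haS : a ∈ S := hSclosed.csSup_mem ⟨0, hS0⟩ hSbdd
  have ha0 : 0 ≤ a := haS.1.1
  have hat : a ≤ t := haS.1.2
  have hpos : ∀ s, a < s → s ≤ t → 0 < w1 s - w2 s := by
    intro s has hst
    by_contra hns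
    push_neg at hns
    exact absurd (le_csSup hSbdd ⟨⟨ha0.trans has.le, hst⟩, hns⟩) (not_le.mpr has)
  have e1 := workload_sub D h1 ha0 ht
  have e2 := workload_sub D h2 ha0 ht
  have hintle : ∀ k : Fin K,
      (∫ s in a..t, Gk (D.Γ k) (w1 s)) ≤ ∫ s in a..t, Gk (D.Γ k) (w2 s) := by
    intro k
    have hi1 : IntervalIntegrable (fun s => Gk (D.Γ k) (w1 s)) volume a t :=
      (h1.2.1 k t ht).mono_set
        (by rw [Set.uIcc_of_le hat, Set.uIcc_of_le ht]; exact Set.Icc_subset_Icc_left ha0)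
    have hi2 : IntervalIntegrable (fun s => Gk (D.Γ k) (w2 s)) volume a t :=
      (h2.2.1 k t ht).mono_set
        (by rw [Set.uIcc_of_le hat, Set.uIcc_of_le ht]; exact Set.Icc_subset_Icc_left ha0)
    rw [intervalIntegral.integral_of_le hat, intervalIntegral.integral_of_le hat]
    refine setIntegral_mono_on hi1.1 hi2.1 measurableSet_Ioc ?_
    intro s hs
    have hgt := hpos s hs.1 hs.2
    exact Gk_antitone (D.Γ k) (by linarith)
  have hsumle : (∑ k, D.rho k * ∫ s in a..t, Gk (D.Γ k) (w1 s))
      ≤ ∑ k, D.rho k * ∫ s in a..t, Gk (D.Γ k) (w2 s) :=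
    Finset.sum_le_sum fun k _ => mul_le_mul_of_nonneg_left (hintle k) (rho_nonneg D k)
  have hfa : w1 a - w2 a ≤ 0 := haS.2
  linarith

lemma workload_unique (D : Data K) {w1 w2 : ℝ → ℝ} (h1 : IsWorkloadSol D w1)
    (h2 : IsWorkloadSol D w2) (h0 : w1 0 = w2 0) {t : ℝ} (ht : 0 ≤ t) : w1 t = w2 t :=
  le_antisymm (workload_le D h1 h2 h0 ht) (workload_le D h2 h1 h0.symm ht)

lemma shiftd_Q {t : ℝ} (ht : 0 ≤ t) : shiftd Q t = Set.Ici t ×ˢ Set.Ici t := by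
  ext p
  simp only [shiftd, shift, Q, Set.mem_setOf_eq, Set.mem_prod, Set.mem_Ici]
  constructor
  · rintro ⟨_, h1, h2⟩
    exact ⟨by linarith, by linarith⟩
  · rintro ⟨h1, h2⟩
    exact ⟨⟨ht.trans h1, ht.trans h2⟩, by linarith, by linarith⟩

lemma kern_eval (Γ : Measure ℝ) [IsProbabilityMeasure Γ] (hna : ∀ x : ℝ, Γ {x} = 0)
    (v : ℝ) {r : ℝ} (hr : 0 ≤ r) :
    kern Γ v (shiftd Q r) = if 0 < v ∧ r ≤ v then Gk Γ r else 0 := by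
  haveI : NullSingletonClass Γ := ⟨hna⟩
  rw [kern, shiftd_Q hr, Measure.prod_prod]
  have hIci : Γ (Set.Ici r) = Γ (Set.Ioi r) := (measure_congr Ioi_ae_eq_Ici).symm
  unfold deltaPlus
  by_cases hv : 0 < v
  · rw [if_pos hv, Measure.dirac_apply' _ measurableSet_Ici]
    by_cases hrv : r ≤ v
    · rw [if_pos ⟨hv, hrv⟩, Set.indicator_of_mem (Set.mem_Ici.mpr hrv), Pi.one_apply, one_mul,
        hIci, Gk]
    · rw [if_neg (fun h => hrv h.2), Set.indicator_of_notMem (by simpa using hrv), zero_mul]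
      simp
  · rw [if_neg hv, if_neg (fun h => hv h.1)]
    simp

lemma Q_eq : Q = Set.Ici (0:ℝ) ×ˢ Set.Ici (0:ℝ) := by
  ext p; simp only [Q, Set.mem_setOf_eq, Set.mem_prod, Set.mem_Ici]

lemma measurableSet_Q : MeasurableSet Q := by
  rw [Q_eq]; exact measurableSet_Ici.prod measurableSet_Ici

/-- Fluid queue-length formula: for each `k`, if `0 ≤ t < w(0)` then
`ζ_k(t)([0,∞)²) = ϑ_k([t,∞)×[t,∞)) + λ_k ∫_0^t G_k(a) da`, and if `t ≥ w(0)` then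
`ζ_k(t)([0,∞)²) = λ_k ∫_0^{w(τ(t))} G_k(a) da`. -/
theorem fluid_queue_length {K : ℕ} (D : Data K)
    (ϑ : Fin K → MeasureTheory.Measure (ℝ × ℝ)) (hϑ : MemI D ϑ)
    (ζ : ℝ → Fin K → MeasureTheory.Measure (ℝ × ℝ)) (hζ : IsFluidSol D ϑ ζ)
    (w : ℝ → ℝ) (hw : IsWorkloadSol D w) (hw0 : w 0 = wMeas ϑ) :
    ∀ k,
      (∀ t : ℝ, 0 ≤ t → t < w 0 →
        ζ t k Q = ϑ k (Set.Ici t ×ˢ Set.Ici t) +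
          ENNReal.ofReal (D.lam k * ∫ a in (0:ℝ)..t, Gk (D.Γ k) a)) ∧
      (∀ t : ℝ, w 0 ≤ t →
        ζ t k Q =
          ENNReal.ofReal (D.lam k * ∫ a in (0:ℝ)..(w (tauF w t)), Gk (D.Γ k) a)) := by
  obtain ⟨w', hw', hw'0, hfin, hζ0, heq⟩ := hζ
  have hweq : ∀ s : ℝ, 0 ≤ s → w' s = w s := fun s hs =>
    workload_unique D hw' hw (by rw [hw'0, hw0]) hs
  have hw00 : 0 ≤ w 0 := hw.1 0 le_rfl
  intro k
  haveI : IsProbabilityMeasure (D.Γ k) := D.Γ_prob k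
  have key : ∀ t : ℝ, 0 ≤ t →
      ζ t k Q = ϑ k (Set.Ici t ×ˢ Set.Ici t) +
        ENNReal.ofReal (D.lam k * ∫ s in (0:ℝ)..t, kern (D.Γ k) (w s) (shiftd Q (t - s))) := by
    intro t ht
    have h := (heq k Q subset_rfl measurableSet_Q t ht).2
    have hcongr : (∫ s in (0:ℝ)..t, kern (D.Γ k) (w' s) (shiftd Q (t - s)))
        = ∫ s in (0:ℝ)..t, kern (D.Γ k) (w s) (shiftd Q (t - s)) := by
      apply intervalIntegral.integral_congr
      intro s hs
      rw [Set.uIcc_of_le ht] at hs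
      simp only [hweq s hs.1]
    rw [h, hcongr, shiftd_Q ht]
  have hne_ae : ∀ c : ℝ, ∀ᵐ s : ℝ, s ≠ c := by
    intro c
    refine (measure_eq_zero_iff_ae_notMem.mp (measure_singleton c)).mono ?_
    intro s hs; simpa using hs
  refine ⟨?_, ?_⟩
  · intro t ht htw
    have hint : (∫ s in (0:ℝ)..t, kern (D.Γ k) (w s) (shiftd Q (t - s)))
        = ∫ a in (0:ℝ)..t, Gk (D.Γ k) a := by
      have h1 : (∫ s in (0:ℝ)..t, kern (D.Γ k) (w s) (shiftd Q (t - s)))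
          = ∫ s in (0:ℝ)..t, Gk (D.Γ k) (t - s) := by
        apply intervalIntegral.integral_congr_ae
        filter_upwards [hne_ae t] with s hsne hsmem
        rw [Set.uIoc_of_le ht] at hsmem
        have hst : s < t := lt_of_le_of_ne hsmem.2 hsne
        have hs0 : 0 ≤ s := hsmem.1.le
        have hts : 0 ≤ t - s := by linarith
        rw [kern_eval (D.Γ k) (D.Γ_noAtom k) (w s) hts]
        have hmono := workload_mono D hw (le_refl (0:ℝ)) hs0
        have h2 : t - s ≤ w s := by linarith
        have h3 : 0 < w s := by linarith
        rw [if_pos ⟨h3, h2⟩]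
      rw [h1, intervalIntegral.integral_comp_sub_left (fun a => Gk (D.Γ k) a) t,
        sub_self, sub_zero]
    rw [key t ht, hint]
  · intro t htw
    have ht : 0 ≤ t := hw00.trans htw
    obtain ⟨hfinϑ, hϑQ, hI1, hbdd, hI3⟩ := hϑ
    have hx0 : ∀ x : ℝ, w 0 < x → (∑ j, ϑ j (Set.Ici x ×ˢ Set.Ici (0:ℝ))) = 0 := by
      intro x hx
      by_contra hne
      have hpos : 0 < ∑ j, ϑ j (Set.Ici x ×ˢ Set.Ici (0:ℝ)) := pos_iff_ne_zero.mpr hne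
      have hxmem : x ∈ {x : ℝ | 0 ≤ x ∧ 0 < ∑ k, ϑ k (Set.Ici x ×ˢ Set.Ici (0:ℝ))} :=
        ⟨hw00.trans hx.le, hpos⟩
      have hle : x ≤ wMeas ϑ := by rw [wMeas]; exact le_csSup hbdd hxmem
      rw [← hw0] at hle
      linarith
    have hvert : ϑ k (({t} : Set ℝ) ×ˢ Set.Ici (0:ℝ)) = 0 := by
      have hsub : ({t} : Set ℝ) ×ˢ Set.Ici (0:ℝ) ⊆ shift Cset (t, 0) := by
        rintro ⟨p1, p2⟩ ⟨hp1, hp2⟩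
        simp only [Set.mem_singleton_iff] at hp1
        subst hp1
        exact ⟨⟨ht, hp2⟩, Or.inr ⟨by simp, by simpa using hp2⟩⟩
      have hzero := hI1 (t, 0) ⟨ht, le_rfl⟩
      exact measure_mono_null hsub ((Finset.sum_eq_zero_iff.mp hzero) k (Finset.mem_univ k))
    have hhoriz : ϑ k (Set.Ioi t ×ˢ Set.Ici (0:ℝ)) = 0 := by
      have hsub : Set.Ioi t ×ˢ Set.Ici (0:ℝ)
          ⊆ ⋃ n : ℕ, Set.Ici (t + 1/((n:ℝ)+1)) ×ˢ Set.Ici (0:ℝ) := by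
        rintro ⟨p1, p2⟩ ⟨hp1, hp2⟩
        obtain ⟨n, hn⟩ := exists_nat_one_div_lt (sub_pos.mpr (Set.mem_Ioi.mp hp1))
        exact Set.mem_iUnion.mpr ⟨n, ⟨by simp only [Set.mem_Ici]; linarith, hp2⟩⟩
      refine measure_mono_null hsub (measure_iUnion_null fun n => ?_)
      have hp : (0:ℝ) < 1/((n:ℝ)+1) := by positivity
      have hgt : w 0 < t + 1/((n:ℝ)+1) := by linarith
      exact (Finset.sum_eq_zero_iff.mp (hx0 _ hgt)) k (Finset.mem_univ k)
    have hϑ0 : ϑ k (Set.Ici t ×ˢ Set.Ici t) = 0 := by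
      refine measure_mono_null ?_ (measure_union_null hvert hhoriz)
      rintro ⟨p1, p2⟩ ⟨hp1, hp2⟩
      rcases eq_or_lt_of_le (Set.mem_Ici.mp hp1) with h | h
      · exact Or.inl ⟨h.symm, ht.trans hp2⟩
      · exact Or.inr ⟨h, ht.trans hp2⟩
    -- properties of τ
    set S : Set ℝ := {s : ℝ | 0 ≤ s ∧ s ≤ t ∧ t ≤ w s + s} with hSdef
    have hcont : ContinuousOn (fun s => w s + s) (Set.Icc 0 t) :=
      (workload_cont D hw).mono Set.Icc_subset_Ici_self
    have hSclosed : IsClosed S := by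
      have hSeq : S = Set.Icc 0 t ∩ (fun s => w s + s) ⁻¹' Set.Ici t := by
        ext s
        simp only [hSdef, Set.mem_setOf_eq, Set.mem_inter_iff, Set.mem_Icc, Set.mem_preimage,
          Set.mem_Ici]
        tauto
      rw [hSeq]
      exact hcont.preimage_isClosed_of_isClosed isClosed_Icc isClosed_Ici
    have htS : t ∈ S := ⟨ht, le_rfl, le_add_of_nonneg_left (hw.1 t ht)⟩
    have hSbdd : BddBelow S := ⟨0, fun s hs => hs.1⟩
    have hτS : tauF w t ∈ S := hSclosed.csInf_mem ⟨t, htS⟩ hSbdd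
    obtain ⟨hτ0, hτt, hτge⟩ := hτS
    have hτle : w (tauF w t) + tauF w t ≤ t := by
      have hmem : t ∈ Set.Icc ((fun s => w s + s) 0) ((fun s => w s + s) t) := by
        simp only [Set.mem_Icc]
        exact ⟨by linarith, by linarith [hw.1 t ht]⟩
      obtain ⟨c, hcI, hc⟩ := intermediate_value_Icc ht hcont hmem
      have hcS : c ∈ S := ⟨hcI.1, hcI.2, le_of_eq hc.symm⟩
      have hτc : tauF w t ≤ c := csInf_le hSbdd hcS
      calc w (tauF w t) + tauF w t ≤ w c + c := workload_mono D hw hτ0 hτc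
        _ = t := hc
    have hτeq : w (tauF w t) = t - tauF w t := by linarith
    -- integral computation
    set F : ℝ → ℝ := fun s => Gk (D.Γ k) (t - s) with hFdef
    have hFmeas : Measurable F :=
      (Gk_antitone (D.Γ k)).measurable.comp (measurable_const.sub measurable_id)
    have hFint : ∀ a b : ℝ, IntervalIntegrable F volume a b := by
      intro a b
      refine (intervalIntegrable_const (c := (1:ℝ))).mono_fun
        hFmeas.aestronglyMeasurable (Eventually.of_forall fun s => ?_)
      simpa [hFdef, Real.norm_eq_abs, abs_of_nonneg (Gk_nonneg (D.Γ k) (t - s))]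
        using Gk_le_one (D.Γ k) (t - s)
    set g : ℝ → ℝ := Set.indicator (Set.Ici (tauF w t)) F with hgdef
    have hgint : ∀ a b : ℝ, IntervalIntegrable g volume a b := fun a b =>
      ⟨(hFint a b).1.indicator measurableSet_Ici, (hFint a b).2.indicator measurableSet_Ici⟩
    have h1 : (∫ s in (0:ℝ)..t, kern (D.Γ k) (w s) (shiftd Q (t - s)))
        = ∫ s in (0:ℝ)..t, g s := by
      apply intervalIntegral.integral_congr_ae
      filter_upwards [hne_ae t, hne_ae (tauF w t)] with s hst' hsτ hsmem
      rw [Set.uIoc_of_le ht] at hsmem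
      have hs0 : 0 < s := hsmem.1
      have hst : s < t := lt_of_le_of_ne hsmem.2 hst'
      have hts : 0 ≤ t - s := by linarith
      rw [kern_eval (D.Γ k) (D.Γ_noAtom k) (w s) hts]
      rcases lt_or_gt_of_ne hsτ with hlt | hgt
      · have hnotS : s ∉ S := fun hS => absurd (csInf_le hSbdd hS) (not_le.mpr hlt)
        have hnle : ¬ t ≤ w s + s := fun hcon => hnotS ⟨hs0.le, hst.le, hcon⟩
        rw [if_neg (fun hcon => hnle (by linarith [hcon.2]))]
        rw [hgdef, Set.indicator_of_notMem (by simpa using not_le.mpr hlt)]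
      · have hmono := workload_mono D hw hτ0 hgt.le
        have hws : t - s ≤ w s := by linarith
        have hwpos : 0 < w s := by linarith
        rw [if_pos ⟨hwpos, hws⟩, hgdef, Set.indicator_of_mem (Set.mem_Ici.mpr hgt.le)]
    have h2 : (∫ s in (0:ℝ)..t, g s) = ∫ s in (tauF w t)..t, F s := by
      rw [← intervalIntegral.integral_add_adjacent_intervals (hgint 0 (tauF w t)) (hgint (tauF w t) t)]
      have hz : (∫ s in (0:ℝ)..(tauF w t), g s) = 0 := by
        have hcg : ∀ᵐ s : ℝ, s ∈ Set.uIoc 0 (tauF w t) → g s = 0 := by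
          filter_upwards [hne_ae (tauF w t)] with s hsτ hsm
          rw [Set.uIoc_of_le hτ0] at hsm
          have : s < tauF w t := lt_of_le_of_ne hsm.2 hsτ
          rw [hgdef, Set.indicator_of_notMem (by simpa using not_le.mpr this)]
        rw [intervalIntegral.integral_congr_ae hcg]
        simp
      have he : (∫ s in (tauF w t)..t, g s) = ∫ s in (tauF w t)..t, F s := by
        apply intervalIntegral.integral_congr
        intro s hs
        rw [Set.uIcc_of_le hτt] at hs
        rw [hgdef, Set.indicator_of_mem (Set.mem_Ici.mpr hs.1)]
      rw [hz, he, zero_add]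
    have h3 : (∫ s in (tauF w t)..t, F s) = ∫ a in (0:ℝ)..(w (tauF w t)), Gk (D.Γ k) a := by
      rw [hFdef, intervalIntegral.integral_comp_sub_left (fun a => Gk (D.Γ k) a) t,
        sub_self, ← hτeq]
    rw [key t ht, hϑ0, zero_add, h1, h2, h3]


end OverloadedFIFO
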